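/- Let n ≥ 2, ε ∈ {+1, −1}, let t_1,…,t_{n−1} and a_1,…,a_n be positive real numbers. Then ∫ exp(−2π Σ_{i=1}^{n−1} (a_i²/t_i² + Σ_{j=i+1}^{n} (a_j²/t_i²) · z_{i,j}·conj(z_{i,j}))) · exp(−2π ε i Σ_{i=1}^{n−1} (z_{i,i+1} + conj(z_{i,i+1}))) ∏_{1 ≤ i < j ≤ n} d_ℂ z_{i,j} = ∏_{i=1}^{n−1} exp(−2π (t_i²/a_{i+1}² + a_i²/t_i²)) · t_i^{2(n−i)} · a_{i+1}^{−2i}, where the integral is over all complex tuples (z_{i,j})_{1 ≤ i < j ≤ n}. -/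

import Mathlib

open Real MeasureTheory ComplexConjugate

instance aux_sigmaFinite : SigmaFinite ((2 : ENNReal) • (volume : Measure ℂ)) := by
  constructor
  refine ⟨⟨spanningSets volume, fun _ => trivial, fun i => ?_, iUnion_spanningSets volume⟩⟩
  simp only [Measure.smul_apply, smul_eq_mul]
  exact ENNReal.mul_lt_top (by norm_num) (measure_spanningSets_lt_top volume i)

lemma aux_pi_smul {ι : Type*} [Fintype ι] :
    (Measure.pi fun _ : ι => (2 : ENNReal) • (volume : Measure ℂ)) =
      ((2 : ENNReal) ^ (Fintype.card ι)) • (Measure.pi fun _ : ι => (volume : Measure ℂ)) := by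
  refine Measure.pi_eq (μ := fun _ : ι => (2 : ENNReal) • (volume : Measure ℂ))
    (μ' := ((2 : ENNReal) ^ (Fintype.card ι)) •
      (Measure.pi fun _ : ι => (volume : Measure ℂ))) fun s hs => ?_
  simp [Measure.pi_pi, Finset.prod_mul_distrib, Finset.prod_const]

lemma aux_sd_sum {n : ℕ} {M : Type*} [AddCommMonoid M]
    (g : {p : Fin n × Fin n // p.1 < p.2} → M) :
    (∑ p : {p : Fin n × Fin n // p.1 < p.2},
        if p.val.2.val = p.val.1.val + 1 then g p else 0)
      = ∑ i : Fin (n - 1),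
          g ⟨(⟨i.val, by have h := i.isLt; omega⟩, ⟨i.val + 1, by have h := i.isLt; omega⟩),
              Fin.mk_lt_mk.mpr (Nat.lt_succ_self _)⟩ := by
  classical
  rw [← Finset.sum_filter]
  refine Finset.sum_bij'
    (i := fun p hp => (⟨p.val.1.val, by
        simp only [Finset.mem_filter] at hp
        have h2 := p.val.2.isLt; omega⟩ : Fin (n - 1)))
    (j := fun i hi => ⟨(⟨i.val, by have h := i.isLt; omega⟩, ⟨i.val + 1, by have h := i.isLt; omega⟩),
        Fin.mk_lt_mk.mpr (Nat.lt_succ_self _)⟩)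
    ?_ ?_ ?_ ?_ ?_
  · intro p hp; exact Finset.mem_univ _
  · intro i hi; simp
  · intro p hp
    simp only [Finset.mem_filter] at hp
    ext <;> simp [hp.2.symm]
  · intro i hi; rfl
  · intro p hp
    simp only [Finset.mem_filter] at hp
    congr 1
    ext <;> simp [hp.2.symm]

lemma aux_pair_prod {M : Type*} [CommMonoid M] (n : ℕ) (f g : ℕ → M) :
    (∏ p : {p : Fin n × Fin n // p.1 < p.2}, (f p.val.1.val * g p.val.2.val))
      = (∏ i ∈ Finset.range n, f i ^ (n - 1 - i)) * ∏ j ∈ Finset.range n, g j ^ j := by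
  classical
  rw [← Finset.prod_subtype (Finset.univ.filter (fun p : Fin n × Fin n => p.1 < p.2))
    (by simp) (fun p : Fin n × Fin n => f p.1.val * g p.2.val)]
  rw [Finset.prod_filter, ← Finset.univ_product_univ, Finset.prod_product]
  have h1 : ∀ (i j : Fin n), (if i < j then f i.val * g j.val else 1)
      = (if i < j then f i.val else 1) * (if i < j then g j.val else 1) := by
    intro i j; split <;> simp
  simp_rw [h1, Finset.prod_mul_distrib]
  congr 1
  · rw [← Fin.prod_univ_eq_prod_range (fun i => f i ^ (n - 1 - i))]
    refine Finset.prod_congr rfl fun i _ => ?_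
    rw [Finset.prod_ite, Finset.prod_const_one, mul_one, Finset.prod_const,
      Finset.filter_lt_eq_Ioi, Fin.card_Ioi]
  · rw [Finset.prod_comm, ← Fin.prod_univ_eq_prod_range (fun j => g j ^ j)]
    refine Finset.prod_congr rfl fun j _ => ?_
    rw [Finset.prod_ite, Finset.prod_const_one, mul_one, Finset.prod_const,
      Finset.filter_gt_eq_Iio, Fin.card_Iio]

lemma aux_single (r : ℝ) (hr : 0 < r) (c : ℂ) :
    (∫ z : ℂ, Complex.exp (-((2 * π * r : ℝ) : ℂ) * (‖z‖ : ℂ) ^ 2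
        + c * ((inner ℝ (1:ℂ) z : ℝ) : ℂ)))
      = ((π / (2 * π * r) : ℝ) : ℂ) * Complex.exp (c ^ 2 / (4 * ((2 * π * r : ℝ) : ℂ))) := by
  have hb : (0:ℝ) < (((2 * π * r : ℝ) : ℂ)).re := by
    simp only [Complex.ofReal_re]; positivity
  have h := GaussianFourier.integral_cexp_neg_mul_sq_norm_add (V := ℂ)
    (b := ((2 * π * r : ℝ) : ℂ)) hb c (1 : ℂ)
  rw [h]
  congr 1
  · rw [Complex.finrank_real_complex]
    norm_num
  · norm_num

lemma aux_real (n : ℕ) (hn : 2 ≤ n) (t a : ℕ → ℝ)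
    (ht : ∀ i, i < n - 1 → 0 < t i) (ha : ∀ i, i < n → 0 < a i) :
    ((2 ^ (Fintype.card {p : Fin n × Fin n // p.1 < p.2}) : ℕ) : ℝ) *
      (Real.exp (-(2 * π * ∑ i ∈ Finset.range (n-1), a i ^ 2 / t i ^ 2)) *
        ((∏ p : {p : Fin n × Fin n // p.1 < p.2},
            t (p.val.1 : ℕ) ^ 2 / (2 * a (p.val.2 : ℕ) ^ 2)) *
          Real.exp (∑ i : Fin (n-1), -(2 * π * (t (i:ℕ) ^ 2 / a ((i:ℕ)+1) ^ 2)))))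
      = ∏ i : Fin (n-1),
          (Real.exp (-(2 * π * (t (i:ℕ) ^ 2 / a ((i:ℕ)+1) ^ 2 + a (i:ℕ) ^ 2 / t (i:ℕ) ^ 2))) *
            t (i:ℕ) ^ (2 * (n - 1 - (i:ℕ))) * a ((i:ℕ)+1) ^ (-((2 * ((i:ℕ) + 1) : ℕ) : ℤ))) := by
  have hapos : ∀ p : {p : Fin n × Fin n // p.1 < p.2}, 0 < a (p.val.2 : ℕ) :=
    fun p => ha _ (p.val.2.isLt)
  obtain ⟨m, rfl⟩ : ∃ m, n = m + 1 := ⟨n - 1, by omega⟩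
  simp only [Nat.add_sub_cancel] at *
  have h6 : ((2 ^ (Fintype.card {p : Fin (m+1) × Fin (m+1) // p.1 < p.2}) : ℕ) : ℝ) *
      (∏ p : {p : Fin (m+1) × Fin (m+1) // p.1 < p.2},
        t (p.val.1 : ℕ) ^ 2 / (2 * a (p.val.2 : ℕ) ^ 2))
      = (∏ i ∈ Finset.range (m+1), (t i ^ 2) ^ (m + 1 - 1 - i)) *
          ∏ j ∈ Finset.range (m+1), ((a j ^ 2)⁻¹) ^ j := by
    rw [show ((2 ^ (Fintype.card {p : Fin (m+1) × Fin (m+1) // p.1 < p.2}) : ℕ) : ℝ)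
        = ∏ _p : {p : Fin (m+1) × Fin (m+1) // p.1 < p.2}, (2:ℝ) by
      push_cast
      simp [Finset.prod_const, Finset.card_univ]]
    rw [← Finset.prod_mul_distrib, ← aux_pair_prod (m+1) (fun i => t i ^ 2) (fun j => (a j ^ 2)⁻¹)]
    refine Finset.prod_congr rfl fun p _ => ?_
    have := (hapos p).ne'
    field_simp
  have h7 : Real.exp (-(2 * π * ∑ i ∈ Finset.range m, a i ^ 2 / t i ^ 2)) *
      Real.exp (∑ i : Fin m, -(2 * π * (t (i:ℕ) ^ 2 / a ((i:ℕ)+1) ^ 2)))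
      = ∏ i : Fin m,
          Real.exp (-(2 * π * (t (i:ℕ) ^ 2 / a ((i:ℕ)+1) ^ 2 + a (i:ℕ) ^ 2 / t (i:ℕ) ^ 2))) := by
    rw [← Real.exp_sum, ← Real.exp_add]
    congr 1
    rw [Fin.sum_univ_eq_sum_range (fun i => -(2 * π * (t i ^ 2 / a (i+1) ^ 2))) m,
      Fin.sum_univ_eq_sum_range
        (fun i => -(2 * π * (t i ^ 2 / a (i+1) ^ 2 + a i ^ 2 / t i ^ 2))) m,
      Finset.mul_sum, ← Finset.sum_neg_distrib, ← Finset.sum_add_distrib]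
    exact Finset.sum_congr rfl fun i _ => by ring
  have hzp : ∀ (x : ℝ) (k : ℕ), x ^ (-((2 * (k + 1) : ℕ) : ℤ)) = ((x ^ 2)⁻¹) ^ (k+1) := by
    intro x k
    rw [zpow_neg, zpow_natCast, pow_mul, ← inv_pow]
  have h8t : (∏ i ∈ Finset.range (m+1), (t i ^ 2) ^ (m + 1 - 1 - i))
      = ∏ i : Fin m, t (i:ℕ) ^ (2 * (m - (i:ℕ))) := by
    simp only [Nat.add_sub_cancel]
    rw [Finset.prod_range_succ, Nat.sub_self, pow_zero, mul_one,
      ← Fin.prod_univ_eq_prod_range (fun i => (t i ^ 2) ^ (m - i)) m]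
    exact Finset.prod_congr rfl fun i _ => by rw [pow_mul]
  have h8a : (∏ j ∈ Finset.range (m+1), ((a j ^ 2)⁻¹) ^ j)
      = ∏ i : Fin m, a ((i:ℕ)+1) ^ (-((2 * ((i:ℕ) + 1) : ℕ) : ℤ)) := by
    rw [Finset.prod_range_succ', pow_zero, mul_one,
      ← Fin.prod_univ_eq_prod_range (fun j => ((a (j+1) ^ 2)⁻¹) ^ (j+1)) m]
    exact Finset.prod_congr rfl fun i _ => (hzp (a ((i:ℕ)+1)) (i:ℕ)).symm
  calc ((2 ^ (Fintype.card {p : Fin (m+1) × Fin (m+1) // p.1 < p.2}) : ℕ) : ℝ) *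
      (Real.exp (-(2 * π * ∑ i ∈ Finset.range m, a i ^ 2 / t i ^ 2)) *
        ((∏ p : {p : Fin (m+1) × Fin (m+1) // p.1 < p.2},
            t (p.val.1 : ℕ) ^ 2 / (2 * a (p.val.2 : ℕ) ^ 2)) *
          Real.exp (∑ i : Fin m, -(2 * π * (t (i:ℕ) ^ 2 / a ((i:ℕ)+1) ^ 2)))))
      = (Real.exp (-(2 * π * ∑ i ∈ Finset.range m, a i ^ 2 / t i ^ 2)) *
          Real.exp (∑ i : Fin m, -(2 * π * (t (i:ℕ) ^ 2 / a ((i:ℕ)+1) ^ 2)))) *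
        (((2 ^ (Fintype.card {p : Fin (m+1) × Fin (m+1) // p.1 < p.2}) : ℕ) : ℝ) *
          ∏ p : {p : Fin (m+1) × Fin (m+1) // p.1 < p.2},
            t (p.val.1 : ℕ) ^ 2 / (2 * a (p.val.2 : ℕ) ^ 2)) := by ring
    _ = (∏ i : Fin m,
          Real.exp (-(2 * π * (t (i:ℕ) ^ 2 / a ((i:ℕ)+1) ^ 2 + a (i:ℕ) ^ 2 / t (i:ℕ) ^ 2)))) *
        ((∏ i : Fin m, t (i:ℕ) ^ (2 * (m - (i:ℕ)))) *
          ∏ i : Fin m, a ((i:ℕ)+1) ^ (-((2 * ((i:ℕ) + 1) : ℕ) : ℤ))) := by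
      rw [h7, h6, h8t, h8a]
    _ = _ := by
      rw [← Finset.prod_mul_distrib, ← Finset.prod_mul_distrib]
      exact Finset.prod_congr rfl fun i _ => by ring

/-- Complex Gaussian integral with character over upper triangular unipotent coordinates:
`∫ exp(−2π Σ_{i=1}^{n−1} (a_i²/t_i² + Σ_{j>i} (a_j²/t_i²) z_{i,j} conj(z_{i,j})))
   exp(−2π ε i Σ (z_{i,i+1} + conj(z_{i,i+1}))) ∏ d_ℂ z
  = ∏_{i=1}^{n−1} exp(−2π (t_i²/a_{i+1}² + a_i²/t_i²)) t_i^{2(n−i)} a_{i+1}^{−2i}`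
(indices written here `0`-based: the paper's `i` is `i+1`);
each `d_ℂ z_{i,j}` is twice the Lebesgue measure on `ℂ`. -/
theorem gaussian_unipotent_character_integral_complex (n : ℕ) (hn : 2 ≤ n) (ε : ℝ)
    (hε : ε = 1 ∨ ε = -1) (t a : ℕ → ℝ)
    (ht : ∀ i, i < n - 1 → 0 < t i) (ha : ∀ i, i < n → 0 < a i) :
    (∫ z : {p : Fin n × Fin n // p.1 < p.2} → ℂ,
        Complex.exp (-(2 * π * (((∑ i ∈ Finset.range (n - 1),
              (a i ^ 2 / t i ^ 2 : ℝ)) : ℂ) +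
            ∑ p : {p : Fin n × Fin n // p.1 < p.2},
              ((a p.val.2 ^ 2 / t p.val.1 ^ 2 : ℝ) : ℂ) * (z p * conj (z p))))) *
          Complex.exp (-(2 * π * (ε : ℂ) * Complex.I *
            ∑ i : Fin (n - 1),
              (z ⟨(⟨i.val, by have h := i.isLt; omega⟩,
                    ⟨i.val + 1, by have h := i.isLt; omega⟩),
                  Fin.mk_lt_mk.mpr (Nat.lt_succ_self _)⟩ +
               conj (z ⟨(⟨i.val, by have h := i.isLt; omega⟩,
                    ⟨i.val + 1, by have h := i.isLt; omega⟩),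
                  Fin.mk_lt_mk.mpr (Nat.lt_succ_self _)⟩))))
      ∂(MeasureTheory.Measure.pi
          fun _ : {p : Fin n × Fin n // p.1 < p.2} => (2 : ENNReal) • (volume : Measure ℂ))) =
      ∏ i : Fin (n - 1),
        ((Real.exp (-(2 * π * (t i.val ^ 2 / a (i.val + 1) ^ 2 + a i.val ^ 2 / t i.val ^ 2))) *
            t i.val ^ (2 * (n - 1 - i.val)) *
            a (i.val + 1) ^ (-(2 * ((i.val : ℤ) + 1))) : ℝ) : ℂ) := by
  classical
  have hπ : (0:ℝ) < π := Real.pi_pos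
  -- positivity facts
  have hp1 : ∀ p : {p : Fin n × Fin n // p.1 < p.2}, (p.val.1 : ℕ) < n - 1 := by
    intro p
    have h1 := Fin.lt_def.mp p.prop
    have h2 := p.val.2.isLt
    omega
  have htpos : ∀ p : {p : Fin n × Fin n // p.1 < p.2}, 0 < t (p.val.1 : ℕ) :=
    fun p => ht _ (hp1 p)
  have hapos : ∀ p : {p : Fin n × Fin n // p.1 < p.2}, 0 < a (p.val.2 : ℕ) :=
    fun p => ha _ (p.val.2.isLt)
  have hε2 : ((ε:ℝ):ℂ) ^ 2 = 1 := by rcases hε with h | h <;> norm_num [h]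
  trans (∫ z : {p : Fin n × Fin n // p.1 < p.2} → ℂ,
      (Complex.exp (-(2 * (π:ℂ) * ((∑ i ∈ Finset.range (n - 1),
            (a i ^ 2 / t i ^ 2 : ℝ)) : ℂ))) *
        ∏ p : {p : Fin n × Fin n // p.1 < p.2},
          Complex.exp (-((2 * π * (a (p.val.2 : ℕ) ^ 2 / t (p.val.1 : ℕ) ^ 2) : ℝ) : ℂ) *
              (‖z p‖ : ℂ) ^ 2 +
            (if (p.val.2 : ℕ) = (p.val.1 : ℕ) + 1 then -(2 * (π:ℂ) * (ε:ℂ) * Complex.I) * 2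
              else 0) * ((inner ℝ (1:ℂ) (z p) : ℝ) : ℂ)))
    ∂(MeasureTheory.Measure.pi
        fun _ : {p : Fin n × Fin n // p.1 < p.2} => (2 : ENNReal) • (volume : Measure ℂ)))
  · refine integral_congr_ae (Filter.Eventually.of_forall fun z => ?_)
    dsimp only
    rw [← Complex.exp_sum, ← Complex.exp_add, ← Complex.exp_add]
    congr 1
    have hzz : ∀ p : {p : Fin n × Fin n // p.1 < p.2},
        z p * conj (z p) = ((‖z p‖ ^ 2 : ℝ) : ℂ) := fun p => by
      push_cast; exact Complex.mul_conj' (z p)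
    simp_rw [hzz]
    have h2 : (∑ p : {p : Fin n × Fin n // p.1 < p.2},
        (if (p.val.2 : ℕ) = (p.val.1 : ℕ) + 1 then -(2 * (π:ℂ) * (ε:ℂ) * Complex.I) * 2
          else 0) * ((inner ℝ (1:ℂ) (z p) : ℝ) : ℂ))
        = -(2 * (π:ℂ) * (ε:ℂ) * Complex.I) *
            ∑ i : Fin (n - 1),
              (z ⟨(⟨i.val, by have h := i.isLt; omega⟩,
                    ⟨i.val + 1, by have h := i.isLt; omega⟩),
                  Fin.mk_lt_mk.mpr (Nat.lt_succ_self _)⟩ +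
               conj (z ⟨(⟨i.val, by have h := i.isLt; omega⟩,
                    ⟨i.val + 1, by have h := i.isLt; omega⟩),
                  Fin.mk_lt_mk.mpr (Nat.lt_succ_self _)⟩)) := by
      rw [Finset.mul_sum,
        ← aux_sd_sum (g := fun p : {p : Fin n × Fin n // p.1 < p.2} =>
          -(2 * (π:ℂ) * (ε:ℂ) * Complex.I) * (z p + conj (z p)))]
      refine Finset.sum_congr rfl fun p _ => ?_
      by_cases h : (p.val.2 : ℕ) = (p.val.1 : ℕ) + 1
      · rw [if_pos h, if_pos h]
        have hin : ((inner ℝ (1:ℂ) (z p) : ℝ) : ℂ) = (z p).re := by simp [RCLike.inner_apply]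
        rw [hin, Complex.add_conj]
        push_cast
        ring
      · rw [if_neg h, if_neg h, zero_mul]
    have h3 : ∀ p : {p : Fin n × Fin n // p.1 < p.2},
        -((2 * π * (a (p.val.2 : ℕ) ^ 2 / t (p.val.1 : ℕ) ^ 2) : ℝ) : ℂ) * (‖z p‖ : ℂ) ^ 2
        = (2 * (π:ℂ)) *
            -(((a (p.val.2 : ℕ) ^ 2 / t (p.val.1 : ℕ) ^ 2 : ℝ) : ℂ) * ((‖z p‖ ^ 2 : ℝ) : ℂ)) := by
      intro p; push_cast; ring
    have h4 : (∑ p : {p : Fin n × Fin n // p.1 < p.2},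
        (-((2 * π * (a (p.val.2 : ℕ) ^ 2 / t (p.val.1 : ℕ) ^ 2) : ℝ) : ℂ) * (‖z p‖ : ℂ) ^ 2 +
          (if (p.val.2 : ℕ) = (p.val.1 : ℕ) + 1 then -(2 * (π:ℂ) * (ε:ℂ) * Complex.I) * 2
            else 0) * ((inner ℝ (1:ℂ) (z p) : ℝ) : ℂ)))
        = (2 * (π:ℂ)) *
            -(∑ p : {p : Fin n × Fin n // p.1 < p.2},
              ((a (p.val.2 : ℕ) ^ 2 / t (p.val.1 : ℕ) ^ 2 : ℝ) : ℂ) * ((‖z p‖ ^ 2 : ℝ) : ℂ)) +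
          -(2 * (π:ℂ) * (ε:ℂ) * Complex.I) *
            ∑ i : Fin (n - 1),
              (z ⟨(⟨i.val, by have h := i.isLt; omega⟩,
                    ⟨i.val + 1, by have h := i.isLt; omega⟩),
                  Fin.mk_lt_mk.mpr (Nat.lt_succ_self _)⟩ +
               conj (z ⟨(⟨i.val, by have h := i.isLt; omega⟩,
                    ⟨i.val + 1, by have h := i.isLt; omega⟩),
                  Fin.mk_lt_mk.mpr (Nat.lt_succ_self _)⟩)) := by
      rw [Finset.sum_add_distrib, h2]
      congr 1
      simp_rw [h3]
      rw [← Finset.mul_sum, ← Finset.sum_neg_distrib]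
    rw [h4]
    ring
  rw [aux_pi_smul, integral_smul_measure, MeasureTheory.integral_const_mul,
    MeasureTheory.integral_fintype_prod_eq_prod
      (f := fun (p : {p : Fin n × Fin n // p.1 < p.2}) (w : ℂ) =>
        Complex.exp (-((2 * π * (a (p.val.2 : ℕ) ^ 2 / t (p.val.1 : ℕ) ^ 2) : ℝ) : ℂ) *
            (‖w‖ : ℂ) ^ 2 +
          (if (p.val.2 : ℕ) = (p.val.1 : ℕ) + 1 then -(2 * (π:ℂ) * (ε:ℂ) * Complex.I) * 2
            else 0) * ((inner ℝ (1:ℂ) w : ℝ) : ℂ)))]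
  have h5 : ∀ p : {p : Fin n × Fin n // p.1 < p.2},
      (∫ x : ℂ, Complex.exp
          (-((2 * π * (a (p.val.2 : ℕ) ^ 2 / t (p.val.1 : ℕ) ^ 2) : ℝ) : ℂ) * (‖x‖ : ℂ) ^ 2 +
            (if (p.val.2 : ℕ) = (p.val.1 : ℕ) + 1 then -(2 * (π:ℂ) * (ε:ℂ) * Complex.I) * 2
              else 0) * ((inner ℝ (1:ℂ) x : ℝ) : ℂ)))
        = ((t (p.val.1 : ℕ) ^ 2 / (2 * a (p.val.2 : ℕ) ^ 2) : ℝ) : ℂ) *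
            Complex.exp (if (p.val.2 : ℕ) = (p.val.1 : ℕ) + 1 then
              ((-(2 * π * (t (p.val.1 : ℕ) ^ 2 / a (p.val.2 : ℕ) ^ 2)) : ℝ) : ℂ) else 0) := by
    intro p
    have hrpos : 0 < a (p.val.2 : ℕ) ^ 2 / t (p.val.1 : ℕ) ^ 2 := by
      have := htpos p; have := hapos p; positivity
    rw [aux_single _ hrpos]
    have ht0 := (htpos p).ne'
    have ha0 := (hapos p).ne'
    have htc : ((t (p.val.1 : ℕ) : ℝ) : ℂ) ≠ 0 := Complex.ofReal_ne_zero.mpr ht0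
    have hac : ((a (p.val.2 : ℕ) : ℝ) : ℂ) ≠ 0 := Complex.ofReal_ne_zero.mpr ha0
    congr 1
    · refine congrArg Complex.ofReal ?_
      rw [div_eq_div_iff (by positivity) (by positivity)]
      field_simp
    · congr 1
      by_cases h : (p.val.2 : ℕ) = (p.val.1 : ℕ) + 1
      · rw [if_pos h, if_pos h]
        have hsq : (-(2 * (π:ℂ) * (ε:ℂ) * Complex.I) * 2) ^ 2
            = 16 * (π:ℂ) ^ 2 * ((ε:ℝ):ℂ) ^ 2 * (Complex.I ^ 2) := by ring
        rw [hsq, hε2, Complex.I_sq]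
        rw [div_eq_iff (by
          refine mul_ne_zero (by norm_num) (Complex.ofReal_ne_zero.mpr ?_)
          positivity)]
        push_cast
        field_simp
        ring
      · rw [if_neg h, if_neg h]
        norm_num
  rw [Finset.prod_congr rfl (fun p _ => h5 p)]
  rw [Finset.prod_mul_distrib, ← Complex.exp_sum]
  rw [aux_sd_sum (g := fun p : {p : Fin n × Fin n // p.1 < p.2} =>
      ((-(2 * π * (t (p.val.1 : ℕ) ^ 2 / a (p.val.2 : ℕ) ^ 2)) : ℝ) : ℂ))]
  simp only [Fin.val_mk]
  rw [ENNReal.toReal_pow, ENNReal.toReal_ofNat, Complex.real_smul]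
  norm_cast
  exact aux_real n hn t a ht ha
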